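/- Horizon asymptotics of the hyperbolic entropy (L1 bias): for every γ > 0 and every θ ∈ ℝ, the limit lim_{η → 0⁺} η·r_γ(θ/η) / log(1/η) equals |θ|, where r_γ(x) = x·arcsinh(x/γ) − √(x² + γ²). -/

import Mathlib

/-- Horizon asymptotics of the hyperbolic entropy (`L1` bias): for every `γ > 0` and
`θ ∈ ℝ`, `η * r_γ(θ/η) / log (1/η) → |θ|` as `η → 0⁺`, where
`r_γ(x) = x * arsinh (x/γ) - √(x² + γ²)`. -/
theorem hyperbolic_entropy_horizon (γ : ℝ) (hγ : 0 < γ) (θ : ℝ) :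
    Filter.Tendsto
      (fun η : ℝ =>
        η * (θ / η * Real.arsinh (θ / η / γ) - Real.sqrt ((θ / η) ^ 2 + γ ^ 2)) /
          Real.log (1 / η))
      (nhdsWithin 0 (Set.Ioi 0)) (nhds |θ|) := by
  have hL : Filter.Tendsto (fun η : ℝ => (Real.log (1 / η))⁻¹)
      (nhdsWithin 0 (Set.Ioi 0)) (nhds 0) := by
    apply Filter.Tendsto.inv_tendsto_atTop
    have : Filter.Tendsto (fun η : ℝ => (1 : ℝ) / η) (nhdsWithin 0 (Set.Ioi 0))
        Filter.atTop := by
      simpa [one_div] using (tendsto_inv_nhdsGT_zero : Filter.Tendsto (fun x : ℝ => x⁻¹)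
        (nhdsWithin 0 (Set.Ioi 0)) Filter.atTop)
    exact Real.tendsto_log_atTop.comp this
  have hid : Filter.Tendsto (fun η : ℝ => η) (nhdsWithin 0 (Set.Ioi 0)) (nhds 0) :=
    (continuous_id.tendsto 0).mono_left nhdsWithin_le_nhds
  rcases eq_or_ne θ 0 with rfl | hθ
  · have h0 : Filter.Tendsto (fun η : ℝ => -γ * (η * (Real.log (1 / η))⁻¹))
        (nhdsWithin 0 (Set.Ioi 0)) (nhds (-γ * (0 * 0))) :=
      Filter.Tendsto.const_mul _ (hid.mul hL)
    simp only [mul_zero, abs_zero] at h0 ⊢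
    refine h0.congr fun η => ?_
    simp only [zero_div, Real.arsinh_zero, mul_zero, zero_sub, zero_pow, ne_eq,
      OfNat.ofNat_ne_zero, not_false_iff, zero_add]
    rw [Real.sqrt_sq hγ.le]
    ring
  · set c : ℝ := |θ| / γ with hc_def
    have habs : 0 < |θ| := abs_pos.mpr hθ
    have hc : 0 < c := div_pos habs hγ
    -- limit of the correction term
    have hK : Filter.Tendsto
        (fun η : ℝ => |θ| * Real.log (c + Real.sqrt (c ^ 2 + η ^ 2)) -
          Real.sqrt (θ ^ 2 + γ ^ 2 * η ^ 2))
        (nhdsWithin 0 (Set.Ioi 0))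
        (nhds (|θ| * Real.log (c + Real.sqrt (c ^ 2 + 0 ^ 2)) -
          Real.sqrt (θ ^ 2 + γ ^ 2 * 0 ^ 2))) := by
      have hcont : ContinuousAt
          (fun η : ℝ => |θ| * Real.log (c + Real.sqrt (c ^ 2 + η ^ 2)) -
            Real.sqrt (θ ^ 2 + γ ^ 2 * η ^ 2)) 0 := by
        apply ContinuousAt.sub
        · apply ContinuousAt.mul continuousAt_const
          apply ContinuousAt.log
          · exact (continuousAt_const.add
              ((continuousAt_const.add ((continuous_pow 2).continuousAt)).sqrt))
          · have : 0 < Real.sqrt (c ^ 2 + (0 : ℝ) ^ 2) := by positivity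
            positivity
        · exact (continuousAt_const.add
            (continuousAt_const.mul ((continuous_pow 2).continuousAt))).sqrt
      exact hcont.tendsto.mono_left nhdsWithin_le_nhds
    have hg : Filter.Tendsto
        (fun η : ℝ => |θ| + (|θ| * Real.log (c + Real.sqrt (c ^ 2 + η ^ 2)) -
          Real.sqrt (θ ^ 2 + γ ^ 2 * η ^ 2)) * (Real.log (1 / η))⁻¹)
        (nhdsWithin 0 (Set.Ioi 0)) (nhds |θ|) := by
      have := (tendsto_const_nhds : Filter.Tendsto (fun _ : ℝ => |θ|)
        (nhdsWithin 0 (Set.Ioi 0)) (nhds |θ|)).add (hK.mul hL)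
      simpa using this
    refine hg.congr' ?_
    have hmem : Set.Ioo (0 : ℝ) 1 ∈ nhdsWithin (0 : ℝ) (Set.Ioi 0) :=
      Ioo_mem_nhdsGT_of_mem (by constructor <;> norm_num)
    filter_upwards [hmem] with η hη
    obtain ⟨hη0, hη1⟩ := hη
    have hlog : 0 < Real.log (1 / η) :=
      Real.log_pos (by rw [lt_div_iff₀ hη0]; linarith)
    -- Step 1: θ * arsinh (θ/η/γ) = |θ| * arsinh (c/η)
    have h1 : θ * Real.arsinh (θ / η / γ) = |θ| * Real.arsinh (c / η) := by
      rcases abs_cases θ with ⟨h, _⟩ | ⟨h, hneg⟩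
      · rw [h, hc_def, h, div_right_comm]
      · rw [h, hc_def, h]
        have : θ / η / γ = -(-θ / γ / η) := by ring
        rw [this, Real.arsinh_neg, div_right_comm]
        ring
    -- Step 2: arsinh (c/η) = log (c + √(c²+η²)) + log (1/η)
    have h2 : Real.arsinh (c / η) =
        Real.log (c + Real.sqrt (c ^ 2 + η ^ 2)) + Real.log (1 / η) := by
      rw [Real.arsinh]
      have hs : Real.sqrt (1 + (c / η) ^ 2) = Real.sqrt (c ^ 2 + η ^ 2) / η := by
        rw [show (1 : ℝ) + (c / η) ^ 2 = (c ^ 2 + η ^ 2) / η ^ 2 by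
          field_simp; ring]
        rw [Real.sqrt_div (by positivity), Real.sqrt_sq hη0.le]
      rw [hs, ← add_div, Real.log_div (by positivity) hη0.ne', one_div,
        Real.log_inv]
      ring
    -- Step 3: η * √((θ/η)² + γ²) = √(θ² + γ²η²)
    have h3 : η * Real.sqrt ((θ / η) ^ 2 + γ ^ 2) =
        Real.sqrt (θ ^ 2 + γ ^ 2 * η ^ 2) := by
      rw [show (θ / η) ^ 2 + γ ^ 2 = (θ ^ 2 + γ ^ 2 * η ^ 2) / η ^ 2 by
        field_simp]
      rw [Real.sqrt_div (by positivity), Real.sqrt_sq hη0.le]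
      field_simp

    have hexp : η * (θ / η * Real.arsinh (θ / η / γ) -
        Real.sqrt ((θ / η) ^ 2 + γ ^ 2)) =
        |θ| * (Real.log (c + Real.sqrt (c ^ 2 + η ^ 2)) + Real.log (1 / η)) -
          Real.sqrt (θ ^ 2 + γ ^ 2 * η ^ 2) := by
      have : η * (θ / η * Real.arsinh (θ / η / γ)) = θ * Real.arsinh (θ / η / γ) := by
        field_simp
      rw [mul_sub, this, h1, h2, h3]
    rw [hexp]
    field_simp
    ring
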